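/- Let G be a graph with no induced copy of the star K_{1,s}. Then the maximum degree of G is at most tw(G)·(s−1). -/

import Mathlib

open SimpleGraph

universe u

/-- A tree-decomposition of a graph `G`. -/
structure TreeDecomp {V : Type u} (G : SimpleGraph V) : Type (u + 1) where
  ι : Type u
  T : SimpleGraph ι
  isTree : T.IsTree
  bag : ι → Set V
  mem_bag : ∀ v : V, ∃ i, v ∈ bag i
  edge_bag : ∀ ⦃u v : V⦄, G.Adj u v → ∃ i, u ∈ bag i ∧ v ∈ bag i
  bag_conn : ∀ v : V, (T.induce {i | v ∈ bag i}).Connected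

/-- `G` has treewidth at most `k`: it admits a tree-decomposition with bags of size ≤ k+1. -/
def TreewidthLE {V : Type u} (G : SimpleGraph V) (k : ℕ) : Prop :=
  ∃ d : TreeDecomp G, ∀ i, (d.bag i).ncard ≤ k + 1

/-- The treewidth of `G`. -/
noncomputable def treewidth {V : Type u} (G : SimpleGraph V) : ℕ :=
  sInf {k | TreewidthLE G k}

/-- `G` has a `c`-tree-partition of width at most `ℓ`: an `H`-partition with `tw(H) ≤ c`
in which every part has at most `ℓ` vertices. -/
def TreePartWidthLE {V : Type u} (G : SimpleGraph V) (c ℓ : ℕ) : Prop :=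
  ∃ (ι : Type u) (H : SimpleGraph ι) (P : V → ι),
    TreewidthLE H c ∧
    (∀ ⦃u v : V⦄, G.Adj u v → P u = P v ∨ H.Adj (P u) (P v)) ∧
    ∀ i : ι, {v : V | P v = i}.ncard ≤ ℓ

/-- The `c`-tree-partition-width of `G`. -/
noncomputable def tpw {V : Type u} (G : SimpleGraph V) (c : ℕ) : ℕ :=
  sInf {ℓ | TreePartWidthLE G c ℓ}



section TreeLemmas
variable {ι : Type*} [DecidableEq ι] {T : SimpleGraph ι}

lemma tree_path_length (ht : T.IsTree) {a b : ι} {p : T.Walk a b} (hp : p.IsPath) :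
    p.length = T.dist a b := by
  obtain ⟨w, hw⟩ := ht.isConnected.exists_walk_length_eq_dist a b
  have h1 : w.bypass.length ≤ T.dist a b := hw ▸ w.length_bypass_le
  have h2 := (ht.existsUnique_path a b).unique hp w.bypass_isPath
  have h3 := SimpleGraph.dist_le p
  rw [h2]
  exact le_antisymm h1 (h2 ▸ h3)

lemma tree_getVert_of_mem (ht : T.IsTree) {a b : ι} {p : T.Walk a b} (hp : p.IsPath)
    {z : ι} (hz : z ∈ p.support) : p.getVert (T.dist a z) = z := by
  have hlen : (p.takeUntil z hz).length = T.dist a z := tree_path_length ht (hp.takeUntil hz)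
  conv_lhs => rw [← p.take_spec hz]
  rw [Walk.getVert_append, hlen]
  simp [Walk.getVert_zero]

lemma tree_eq_on_path (ht : T.IsTree) {a b : ι} {p : T.Walk a b} (hp : p.IsPath)
    {z z' : ι} (hz : z ∈ p.support) (hz' : z' ∈ p.support)
    (hd : T.dist a z = T.dist a z') : z = z' := by
  have e1 := tree_getVert_of_mem ht hp hz
  have e2 := tree_getVert_of_mem ht hp hz'
  rw [← e1, ← e2, hd]

lemma tree_support_subset (ht : T.IsTree) {S : Set ι} (hS : (T.induce S).Connected)
    {a b : ι} (ha : a ∈ S) (hb : b ∈ S) {p : T.Walk a b} (hp : p.IsPath) :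
    ∀ z ∈ p.support, z ∈ S := by
  obtain ⟨w0⟩ := hS ⟨a, ha⟩ ⟨b, hb⟩
  let f : T.induce S →g T := ⟨Subtype.val, fun h => h⟩
  let w : T.Walk a b := w0.map f
  have hsup : ∀ z ∈ w.support, z ∈ S := by
    intro z hz
    rw [Walk.support_map] at hz
    obtain ⟨⟨z', hz'⟩, _, rfl⟩ := List.mem_map.mp hz
    exact hz'
  have h2 := (ht.existsUnique_path a b).unique hp w.bypass_isPath
  intro z hz
  rw [h2] at hz
  exact hsup z (w.support_bypass_subset hz)

end TreeLemmas


lemma mel {V : Type u} {G : SimpleGraph V} (d : TreeDecomp G) (r : d.ι) (v : V)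
    (hv : v ∈ d.bag r) (A : Finset V) (hA : ∀ u ∈ A, G.Adj v u) (hne : A.Nonempty) :
    ∃ u ∈ A, ∃ i, v ∈ d.bag i ∧ u ∈ d.bag i ∧ ∀ w ∈ A, G.Adj u w → w ∈ d.bag i := by
  classical
  have ht := d.isTree
  set T := d.T with hT
  have hne' : ∀ u : V, ((T.dist r) '' {i | u ∈ d.bag i}).Nonempty := by
    intro u
    obtain ⟨i, hi⟩ := d.mem_bag u
    exact ⟨T.dist r i, i, hi, rfl⟩
  set f : V → ℕ := fun u => sInf ((T.dist r) '' {i | u ∈ d.bag i}) with hf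
  have hmem : ∀ u : V, ∃ i, u ∈ d.bag i ∧ T.dist r i = f u := by
    intro u
    obtain ⟨i, hi, hd⟩ := Nat.sInf_mem (hne' u)
    exact ⟨i, hi, hd⟩
  choose g hg1 hg2 using hmem
  have hmin : ∀ (u : V) (i : d.ι), u ∈ d.bag i → f u ≤ T.dist r i :=
    fun u i h => Nat.sInf_le ⟨i, h, rfl⟩
  have hpath := ht.existsUnique_path
  -- gate property
  have gate : ∀ (u : V) (j : d.ι), u ∈ d.bag j → ∀ (p : T.Walk r j), p.IsPath →
      g u ∈ p.support := by
    intro u j hj p hp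
    obtain ⟨p1, hp1, -⟩ := hpath r (g u)
    obtain ⟨q, hq, -⟩ := hpath (g u) j
    have hqS : ∀ z ∈ q.support, z ∈ {i | u ∈ d.bag i} :=
      tree_support_subset ht (d.bag_conn u) (hg1 u) hj hq
    have hlen1 : p1.length = T.dist r (g u) := tree_path_length ht hp1
    have happ : (p1.append q).IsPath := by
      rw [Walk.isPath_def, Walk.support_append, List.nodup_append]
      refine ⟨hp1.support_nodup, hq.support_nodup.tail, ?_⟩
      intro z hz1 z' hz2 hzz'
      subst hzz'
      have hzq : z ∈ q.support := List.mem_of_mem_tail hz2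
      have h5 : f u ≤ T.dist r z := hmin u z (hqS z hzq)
      have h6 : T.dist r z ≤ p1.length :=
        le_trans (SimpleGraph.dist_le (p1.takeUntil z hz1)) (p1.length_takeUntil_le hz1)
      have h7 : T.dist r z = T.dist r (g u) := le_antisymm (hlen1 ▸ h6) (hg2 u ▸ h5)
      have h8 : z = g u := tree_eq_on_path ht hp1 hz1 p1.end_mem_support h7
      have h9 := hq.support_nodup
      rw [q.support_eq_cons] at h9
      exact (List.nodup_cons.mp h9).1 (h8 ▸ hz2)
    have heq := (hpath r j).unique hp happ
    rw [heq, Walk.mem_support_append_iff]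
    exact Or.inl p1.end_mem_support
  -- key lemma
  have key : ∀ (u x : V) (j : d.ι), u ∈ d.bag j → x ∈ d.bag j → f x ≤ f u →
      x ∈ d.bag (g u) := by
    intro u x j huj hxj hfx
    obtain ⟨p, hp, -⟩ := hpath r j
    have hgu := gate u j huj p hp
    have hgx := gate x j hxj p hp
    have hdrop := hp.dropUntil hgx
    have hsub : ∀ z ∈ (p.dropUntil (g x) hgx).support, z ∈ {i | x ∈ d.bag i} :=
      tree_support_subset ht (d.bag_conn x) (hg1 x) hxj hdrop
    have hcase : g u ∈ (p.takeUntil (g x) hgx).support ∨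
        g u ∈ (p.dropUntil (g x) hgx).support := by
      have h := hgu
      conv at h => rw [← p.take_spec hgx]
      rw [Walk.mem_support_append_iff] at h
      exact h
    rcases hcase with h | h
    · have h1 : T.dist r (g u) ≤ (p.takeUntil (g x) hgx).length :=
        le_trans (SimpleGraph.dist_le ((p.takeUntil (g x) hgx).takeUntil (g u) h))
          ((p.takeUntil (g x) hgx).length_takeUntil_le h)
      have h2 : (p.takeUntil (g x) hgx).length = T.dist r (g x) :=
        tree_path_length ht (hp.takeUntil hgx)
      have h3 : T.dist r (g u) = T.dist r (g x) := by
        have e1 := hg2 u; have e2 := hg2 x; omega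
      have h4 : g u = g x := tree_eq_on_path ht hp hgu hgx h3
      rw [h4]; exact hg1 x
    · exact hsub _ h
  obtain ⟨u, hu, hmax⟩ := A.exists_max_image f hne
  refine ⟨u, hu, g u, ?_, hg1 u, ?_⟩
  · obtain ⟨j, hvj, huj⟩ := d.edge_bag (hA u hu)
    have hfv : f v ≤ f u := by
      have := hmin v r hv
      simp only [SimpleGraph.dist_self] at this
      omega
    exact key u v j huj hvj hfv
  · intro w hw hadj
    obtain ⟨j, huj, hwj⟩ := d.edge_bag hadj
    exact key u w j huj hwj (hmax w hw)

lemma count_lemma {V : Type} [Fintype V] {G : SimpleGraph V} (d : TreeDecomp G) (k : ℕ)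
    (hbag : ∀ i, (d.bag i).ncard ≤ k + 1) (v : V) :
    ∀ (n : ℕ) (A : Finset V), A.card ≤ n → (∀ u ∈ A, G.Adj v u) →
      ∃ I : Finset V, I ⊆ A ∧ (∀ a ∈ I, ∀ b ∈ I, a ≠ b → ¬ G.Adj a b) ∧
        A.card ≤ k * I.card := by
  classical
  obtain ⟨r, hr⟩ := d.mem_bag v
  intro n
  induction n with
  | zero =>
    intro A hcard _
    exact ⟨∅, Finset.empty_subset _, by simp, by simpa using hcard⟩
  | succ n ih =>
    intro A hcard hA
    rcases A.eq_empty_or_nonempty with rfl | hne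
    · exact ⟨∅, Finset.empty_subset _, by simp, by simp⟩
    obtain ⟨u, hu, i, hvi, hui, hnbr⟩ := mel d r v hr A hA hne
    set R : Finset V := A.filter (fun w => G.Adj u w) with hR
    have hvR : v ∉ insert u R := by
      simp only [Finset.mem_insert, hR, Finset.mem_filter]
      rintro (h | ⟨hvA, -⟩)
      · have := hA u hu; rw [← h] at this; exact G.irrefl this
      · exact G.irrefl (hA v hvA)
    have hsubbag : ((insert v (insert u R) : Finset V) : Set V) ⊆ d.bag i := by
      intro z hz
      simp only [Finset.coe_insert, Set.mem_insert_iff, Finset.mem_coe, Finset.mem_insert,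
        hR, Finset.mem_filter] at hz
      rcases hz with rfl | rfl | ⟨hzA, hadj⟩
      · exact hvi
      · exact hui
      · exact hnbr z hzA hadj
    have hcard1 : (insert v (insert u R)).card ≤ k + 1 := by
      have h1 : ((insert v (insert u R) : Finset V) : Set V).ncard ≤ (d.bag i).ncard :=
        Set.ncard_le_ncard hsubbag (Set.toFinite _)
      rw [Set.ncard_coe_finset] at h1
      exact le_trans h1 (hbag i)
    have hcard2 : (insert u R).card ≤ k := by
      rw [Finset.card_insert_of_notMem hvR] at hcard1
      omega
    set B : Finset V := A \ insert u R with hB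
    have huB : u ∉ B := by simp [hB]
    have hBA : B ⊆ A := Finset.sdiff_subset
    have hBcard : B.card ≤ n := by
      have : B.card < A.card := Finset.card_lt_card ⟨hBA, fun hsub => huB (hsub hu)⟩
      omega
    obtain ⟨I', hI'B, hI'ind, hI'card⟩ := ih B hBcard (fun w hw => hA w (hBA hw))
    have huI' : u ∉ I' := fun h => huB (hI'B h)
    refine ⟨insert u I', ?_, ?_, ?_⟩
    · intro z hz
      rcases Finset.mem_insert.mp hz with rfl | hz
      · exact hu
      · exact hBA (hI'B hz)
    · intro a ha b hb hab
      have hnadj : ∀ c ∈ I', ¬ G.Adj u c := by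
        intro c hc hadj
        have hcB := hI'B hc
        rw [hB, Finset.mem_sdiff] at hcB
        exact hcB.2 (Finset.mem_insert_of_mem (Finset.mem_filter.mpr ⟨hcB.1, hadj⟩))
      intro hadj
      rcases Finset.mem_insert.mp ha with ha' | ha' <;>
        rcases Finset.mem_insert.mp hb with hb' | hb'
      · exact hab (ha'.trans hb'.symm)
      · subst ha'; exact hnadj b hb' hadj
      · subst hb'; exact hnadj a ha' (G.adj_symm hadj)
      · exact hI'ind a ha' b hb' hab hadj
    · have hAsplit : A.card ≤ B.card + (insert u R).card := by
        have hsub : A ⊆ B ∪ insert u R := by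
          intro z hz
          rw [Finset.mem_union, hB, Finset.mem_sdiff]
          by_cases h : z ∈ insert u R
          · exact Or.inr h
          · exact Or.inl ⟨hz, h⟩
        exact le_trans (Finset.card_le_card hsub) (Finset.card_union_le _ _)
      have : A.card ≤ k * I'.card + k := by omega
      rw [Finset.card_insert_of_notMem huI']
      calc A.card ≤ k * I'.card + k := this
        _ = k * (I'.card + 1) := by ring

lemma trivial_decomp {V : Type} [Fintype V] (G : SimpleGraph V) :
    TreewidthLE G (Fintype.card V - 1) := by
  have hc : (⊥ : SimpleGraph Unit).Connected := by
    rw [connected_iff]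
    exact ⟨fun a b => (Subsingleton.elim a b) ▸ Reachable.refl a, ⟨()⟩⟩
  refine ⟨⟨Unit, ⊥, ⟨hc, isAcyclic_bot⟩, fun _ => Set.univ, fun v => ⟨(), trivial⟩,
    fun u v _ => ⟨(), trivial, trivial⟩, fun v => ?_⟩, fun i => ?_⟩
  · rw [connected_iff]
    exact ⟨fun a b => (Subsingleton.elim a b) ▸ Reachable.refl a, ⟨⟨(), trivial⟩⟩⟩
  · simp only [Set.ncard_univ, Nat.card_eq_fintype_card]
    omega


/-- If `G` contains no induced star `K_{1,s}` (no vertex has `s` pairwise non-adjacent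
neighbours), then the maximum degree of `G` is at most `tw(G)·(s−1)`. -/
theorem stmt_14 {V : Type} [Fintype V] (G : SimpleGraph V) [DecidableRel G.Adj] (s : ℕ)
    (hfree : ∀ (v : V) (A : Finset V), (∀ a ∈ A, G.Adj v a) →
      (∀ a ∈ A, ∀ b ∈ A, a ≠ b → ¬ G.Adj a b) → A.card < s) :
    G.maxDegree ≤ treewidth G * (s - 1) := by
  classical
  have hSne : {k | TreewidthLE G k}.Nonempty := ⟨Fintype.card V - 1, trivial_decomp G⟩
  have hk : TreewidthLE G (treewidth G) := Nat.sInf_mem hSne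
  obtain ⟨d, hbag⟩ := hk
  set k := treewidth G
  apply SimpleGraph.maxDegree_le_of_forall_degree_le
  intro v
  obtain ⟨I, hIA, hInd, hIcard⟩ := count_lemma d k hbag v (G.neighborFinset v).card
    (G.neighborFinset v) le_rfl (fun u hu => (G.mem_neighborFinset v u).mp hu)
  have hIs : I.card < s :=
    hfree v I (fun a ha => (G.mem_neighborFinset v a).mp (hIA ha)) hInd
  calc G.degree v = (G.neighborFinset v).card := rfl
    _ ≤ k * I.card := hIcard
    _ ≤ k * (s - 1) := Nat.mul_le_mul_left k (by omega)
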